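/- The number of distinct indices i ∈ [2,n] with δ(i) ≠ 0 is at most O(√(nq)). Concretely, |{i ∈ [2,n] : lmco(i) ≠ lmco(i−1)}| ≤ c·√(nq) for a universal constant c. -/

import Mathlib

open Finset

/-- `[i,j]` is a co-occurrence of `Q` in the length-`n` string `S` (1-indexed):
`1 ≤ i ≤ j ≤ n` and every character of `Q` occurs in `S[i..j]`. -/
def Cooc {α : Type*} (n : ℕ) (S : ℕ → α) (Q : Finset α) (i j : ℕ) : Prop :=
  1 ≤ i ∧ i ≤ j ∧ j ≤ n ∧ ∀ c ∈ Q, ∃ k, i ≤ k ∧ k ≤ j ∧ S k = c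

/-- `[i,j]` is a left-minimal co-occurrence: a co-occurrence such that `[i+1,j]` is not. -/
def LeftMinCooc {α : Type*} (n : ℕ) (S : ℕ → α) (Q : Finset α) (i j : ℕ) : Prop :=
  Cooc n S Q i j ∧ ¬ Cooc n S Q (i+1) j

/-- `[i,j]` is a minimal co-occurrence: a co-occurrence such that neither
`[i+1,j]` nor `[i,j-1]` is a co-occurrence. -/
def MinCooc {α : Type*} (n : ℕ) (S : ℕ → α) (Q : Finset α) (i j : ℕ) : Prop :=
  Cooc n S Q i j ∧ ¬ Cooc n S Q (i+1) j ∧ ¬ Cooc n S Q i (j-1)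

/-- `lmco n S Q w`: number of left-minimal co-occurrences of `Q` in `S` of length `w`. -/
noncomputable def lmco {α : Type*} (n : ℕ) (S : ℕ → α) (Q : Finset α) (w : ℕ) : ℕ :=
  {p : ℕ × ℕ | LeftMinCooc n S Q p.1 p.2 ∧ p.2 - p.1 + 1 = w}.ncard

/-- `dlt n S Q i = lmco(i) - lmco(i-1)` as an integer. -/
noncomputable def dlt {α : Type*} (n : ℕ) (S : ℕ → α) (Q : Finset α) (i : ℕ) : ℤ :=
  (lmco n S Q i : ℤ) - (lmco n S Q (i-1) : ℤ)

/-- `coN n S Q w`: number of length-`w` co-occurrences of `Q` in `S`, i.e. the number of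
windows `[k-w+1,k]` with `w ≤ k ≤ n` that are co-occurrences. -/
noncomputable def coN {α : Type*} (n : ℕ) (S : ℕ → α) (Q : Finset α) (w : ℕ) : ℕ :=
  {k : ℕ | w ≤ k ∧ k ≤ n ∧ Cooc n S Q (k - w + 1) k}.ncard

section aux
variable {α : Type*} {n : ℕ} {S : ℕ → α} {Q : Finset α}

lemma cooc_mono_right {i j j' : ℕ} (h : Cooc n S Q i j) (hjj : j ≤ j') (hj'n : j' ≤ n) :
    Cooc n S Q i j' := by
  obtain ⟨h1, h2, h3, h4⟩ := h
  refine ⟨h1, h2.trans hjj, hj'n, fun c hc => ?_⟩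
  obtain ⟨k, hk1, hk2, hk3⟩ := h4 c hc
  exact ⟨k, hk1, hk2.trans hjj, hk3⟩

lemma lmc_interval {i j j' j'' : ℕ} (h : LeftMinCooc n S Q i j)
    (h'' : LeftMinCooc n S Q i j'') (h1 : j ≤ j') (h2 : j' ≤ j'') :
    LeftMinCooc n S Q i j' := by
  refine ⟨cooc_mono_right h.1 h1 (h2.trans h''.1.2.2.1), fun hc => ?_⟩
  exact h''.2 (cooc_mono_right hc h2 h''.1.2.2.1)

lemma lmc_crit (hq : 2 ≤ Q.card) {i j : ℕ} (h : LeftMinCooc n S Q i j) :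
    S i ∈ Q ∧ ∀ k, i < k → k ≤ j → S k ≠ S i := by
  obtain ⟨⟨hi1, hij, hjn, hall⟩, hnc⟩ := h
  by_cases hij' : i + 1 ≤ j
  · by_cases hex : ∀ c ∈ Q, ∃ k, i + 1 ≤ k ∧ k ≤ j ∧ S k = c
    · exact absurd ⟨by omega, hij', hjn, hex⟩ hnc
    · push_neg at hex
      obtain ⟨c, hcQ, hc⟩ := hex
      obtain ⟨k, hk1, hk2, hk3⟩ := hall c hcQ
      have hki : k = i := by
        by_contra hne
        exact hc k (by omega) hk2 hk3
      subst hki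
      exact ⟨hk3 ▸ hcQ, fun k' h1 h2 hSk => hc k' (by omega) h2 (by rw [hSk, hk3])⟩
  · have hij2 : i = j := by omega
    obtain ⟨a, ha, b, hb, hab⟩ := Finset.one_lt_card.mp (by omega : 1 < Q.card)
    obtain ⟨k, hk1, hk2, hk3⟩ := hall a ha
    obtain ⟨k', hk1', hk2', hk3'⟩ := hall b hb
    have hka : k = i := by omega
    have hkb : k' = i := by omega
    rw [hka] at hk3; rw [hkb] at hk3'
    exact absurd (hk3.symm.trans hk3') hab

lemma lmco_eq {w : ℕ} (hw : 1 ≤ w) :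
    lmco n S Q w = {i : ℕ | LeftMinCooc n S Q i (i + (w - 1))}.ncard := by
  unfold lmco
  have hset : {p : ℕ × ℕ | LeftMinCooc n S Q p.1 p.2 ∧ p.2 - p.1 + 1 = w}
      = (fun i => (i, i + (w - 1))) '' {i : ℕ | LeftMinCooc n S Q i (i + (w - 1))} := by
    ext ⟨i, j⟩
    simp only [Set.mem_setOf_eq, Set.mem_image, Prod.mk.injEq]
    constructor
    · rintro ⟨h, hlen⟩
      have hij : i ≤ j := h.1.2.1
      have hj : j = i + (w - 1) := by omega
      exact ⟨i, by rw [← hj]; exact h, rfl, hj.symm⟩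
    · rintro ⟨i', h, rfl, rfl⟩
      exact ⟨h, by omega⟩
  rw [hset, Set.ncard_image_of_injective]
  intro a b hab
  simpa using congrArg Prod.fst hab

lemma delta_witness {w : ℕ} (hw : 2 ≤ w) (hne : lmco n S Q w ≠ lmco n S Q (w-1)) :
    ∃ i, (LeftMinCooc n S Q i (i + (w - 1)) ∧ ¬ LeftMinCooc n S Q i (i + (w - 2))) ∨
         (¬ LeftMinCooc n S Q i (i + (w - 1)) ∧ LeftMinCooc n S Q i (i + (w - 2))) := by
  by_contra hcon
  push_neg at hcon
  apply hne
  rw [lmco_eq (by omega), lmco_eq (by omega)]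
  congr 1
  ext i
  simp only [Set.mem_setOf_eq]
  rw [show w - 1 - 1 = w - 2 from by omega]
  have := hcon i
  tauto

end aux

lemma sum_distinct (s : Finset ℕ) :
    (∀ x ∈ s, 1 ≤ x) → s.card * (s.card + 1) ≤ 2 * ∑ x ∈ s, x := by
  induction s using Finset.induction_on_max with
  | empty => simp
  | insert a s ha ih =>
    intro h
    have h1 : ∀ x ∈ s, 1 ≤ x := fun x hx => h x (Finset.mem_insert_of_mem hx)
    have hsub : s ⊆ Finset.Icc 1 (a - 1) := fun x hx =>
      Finset.mem_Icc.mpr ⟨h1 x hx, by have := ha x hx; omega⟩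
    have hcard : s.card ≤ a - 1 := by
      calc s.card ≤ (Finset.Icc 1 (a-1)).card := Finset.card_le_card hsub
        _ = a - 1 := by rw [Nat.card_Icc]; omega
    have hna : a ∉ s := fun hx => lt_irrefl a (ha a hx)
    rw [Finset.sum_insert hna, Finset.card_insert_of_notMem hna]
    have hih := ih h1
    have ha1 : 1 ≤ a := h a (Finset.mem_insert_self a s)
    have haK : s.card + 1 ≤ a := by omega
    nlinarith [hih, haK]

lemma count_lemma {α : Type*} (n : ℕ) (S : ℕ → α) (Q : Finset α)
    (T : Finset ℕ) (f len : ℕ → ℕ)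
    (h1 : ∀ w ∈ T, 1 ≤ len w)
    (hleninj : ∀ w ∈ T, ∀ w' ∈ T, len w = len w' → w = w')
    (hfinj : ∀ w ∈ T, ∀ w' ∈ T, f w = f w' → w = w')
    (hlb : ∀ w ∈ T, 1 ≤ f w)
    (hub : ∀ w ∈ T, f w + (len w - 1) ≤ n)
    (hQ : ∀ w ∈ T, S (f w) ∈ Q)
    (hno : ∀ w ∈ T, ∀ k, f w < k → k ≤ f w + (len w - 1) → S k ≠ S (f w)) :
    T.card * (T.card + 1) ≤ 2 * (n * Q.card) := by
  classical
  have hsum1 : T.card * (T.card + 1) ≤ 2 * ∑ w ∈ T, len w := by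
    have himg : (T.image len).card = T.card :=
      Finset.card_image_of_injOn (fun w hw w' hw' => hleninj w hw w' hw')
    have hsd := sum_distinct (T.image len) (fun x hx => by
      obtain ⟨w, hw, rfl⟩ := Finset.mem_image.mp hx; exact h1 w hw)
    rw [himg, Finset.sum_image (fun x hx y hy => hleninj x hx y hy)] at hsd
    exact hsd
  have hsum2 : ∑ w ∈ T, len w ≤ n * Q.card := by
    have hfib : ∑ c ∈ Q, ∑ w ∈ T.filter (fun w => S (f w) = c), len w = ∑ w ∈ T, len w :=
      Finset.sum_fiberwise_of_maps_to hQ _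
    rw [← hfib]
    have hinner : ∀ c ∈ Q, ∑ w ∈ T.filter (fun w => S (f w) = c), len w ≤ n := by
      intro c _
      set Tc := T.filter (fun w => S (f w) = c) with hTc
      have hdisj : ∀ w ∈ Tc, ∀ w' ∈ Tc, w ≠ w' →
          Disjoint (Finset.Icc (f w) (f w + (len w - 1)))
            (Finset.Icc (f w') (f w' + (len w' - 1))) := by
        intro w hw w' hw' hne
        have hwT : w ∈ T := (Finset.mem_filter.mp hw).1
        have hw'T : w' ∈ T := (Finset.mem_filter.mp hw').1
        have hcw : S (f w) = c := (Finset.mem_filter.mp hw).2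
        have hcw' : S (f w') = c := (Finset.mem_filter.mp hw').2
        have hff : f w ≠ f w' := fun h => hne (hfinj w hwT w' hw'T h)
        rcases lt_or_gt_of_ne hff with hlt | hlt
        · have hgap : f w + (len w - 1) < f w' := by
            by_contra hle
            exact hno w hwT (f w') hlt (by omega) (by rw [hcw', hcw])
          rw [Finset.disjoint_left]
          intro k hk hk'
          simp only [Finset.mem_Icc] at hk hk'
          omega
        · have hgap : f w' + (len w' - 1) < f w := by
            by_contra hle
            exact hno w' hw'T (f w) hlt (by omega) (by rw [hcw', hcw])
          rw [Finset.disjoint_left]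
          intro k hk hk'
          simp only [Finset.mem_Icc] at hk hk'
          omega
      have hcardunion : ∑ w ∈ Tc, len w
          = (Tc.biUnion (fun w => Finset.Icc (f w) (f w + (len w - 1)))).card := by
        rw [Finset.card_biUnion hdisj]
        refine Finset.sum_congr rfl (fun w hw => ?_)
        have hwT : w ∈ T := (Finset.mem_filter.mp hw).1
        rw [Nat.card_Icc]
        have := h1 w hwT
        omega
      rw [hcardunion]
      have hsub : Tc.biUnion (fun w => Finset.Icc (f w) (f w + (len w - 1)))
          ⊆ Finset.Icc 1 n := by
        intro k hk
        simp only [Finset.mem_biUnion] at hk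
        obtain ⟨w, hw, hk⟩ := hk
        have hwT : w ∈ T := (Finset.mem_filter.mp hw).1
        simp only [Finset.mem_Icc] at hk ⊢
        have := hlb w hwT; have := hub w hwT
        omega
      calc (Tc.biUnion _).card ≤ (Finset.Icc 1 n).card := Finset.card_le_card hsub
        _ = n := by rw [Nat.card_Icc]; omega
    calc ∑ c ∈ Q, ∑ w ∈ T.filter (fun w => S (f w) = c), len w
        ≤ ∑ _c ∈ Q, n := Finset.sum_le_sum hinner
      _ = n * Q.card := by rw [Finset.sum_const, smul_eq_mul, mul_comm]
  exact hsum1.trans (Nat.mul_le_mul_left 2 hsum2)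

lemma card_le_sqrt {k n q : ℕ} (h : k * (k + 1) ≤ 2 * (n * q)) :
    (k : ℝ) ≤ Real.sqrt 2 * Real.sqrt (n * q) := by
  rw [← Real.sqrt_mul (by norm_num) ((n : ℝ) * q)]
  rw [show ((2:ℝ) * ((n:ℝ) * q)) = ((2 * (n * q) : ℕ) : ℝ) by push_cast; ring]
  rcases Nat.eq_zero_or_pos k with hk | hk
  · subst hk; push_cast; positivity
  · rw [Real.le_sqrt' (by exact_mod_cast hk)]
    have : k ^ 2 ≤ 2 * (n * q) := by nlinarith
    exact_mod_cast this

theorem stmt12 :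
    ∃ c : ℝ, 0 < c ∧
      ∀ (α : Type) (n : ℕ) (S : ℕ → α) (Q : Finset α), 2 ≤ Q.card →
        (((Finset.Icc 2 n).filter
            (fun i => lmco n S Q i ≠ lmco n S Q (i-1))).card : ℝ) ≤
          c * Real.sqrt (n * Q.card) := by
  refine ⟨3, by norm_num, ?_⟩
  intro α n S Q hq
  classical
  set D := (Finset.Icc 2 n).filter (fun i => lmco n S Q i ≠ lmco n S Q (i-1)) with hD
  have hDw : ∀ w ∈ D, 2 ≤ w ∧ w ≤ n := by
    intro w hw
    exact Finset.mem_Icc.mp (Finset.mem_filter.mp hw).1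
  have hwit : ∀ w ∈ D, ∃ i,
      (LeftMinCooc n S Q i (i + (w - 1)) ∧ ¬ LeftMinCooc n S Q i (i + (w - 2))) ∨
      (¬ LeftMinCooc n S Q i (i + (w - 1)) ∧ LeftMinCooc n S Q i (i + (w - 2))) := by
    intro w hw
    exact delta_witness (hDw w hw).1 (Finset.mem_filter.mp hw).2
  choose! g hg using hwit
  set P : ℕ → Prop := fun w =>
    LeftMinCooc n S Q (g w) (g w + (w - 1)) ∧ ¬ LeftMinCooc n S Q (g w) (g w + (w - 2))
    with hP
  set A := D.filter P with hA
  set B := D.filter (fun w => ¬ P w) with hB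
  have hBspec : ∀ w ∈ B, ¬ LeftMinCooc n S Q (g w) (g w + (w - 1)) ∧
      LeftMinCooc n S Q (g w) (g w + (w - 2)) := by
    intro w hw
    obtain ⟨hwD, hnp⟩ := Finset.mem_filter.mp hw
    rcases hg w hwD with h | h
    · exact absurd h hnp
    · exact h
  -- bound for A
  have hAcount : A.card * (A.card + 1) ≤ 2 * (n * Q.card) := by
    refine count_lemma n S Q A g (fun w => w) ?_ ?_ ?_ ?_ ?_ ?_ ?_
    · intro w hw; show 1 ≤ w; have := hDw w (Finset.mem_filter.mp hw).1; omega
    · intro w hw w' hw' h; exact h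
    · intro w hw w' hw' hgeq
      have hwD := (Finset.mem_filter.mp hw).1
      have hw'D := (Finset.mem_filter.mp hw').1
      have hPw := (Finset.mem_filter.mp hw).2
      have hPw' := (Finset.mem_filter.mp hw').2
      have h2w := (hDw w hwD).1
      have h2w' := (hDw w' hw'D).1
      by_contra hne
      rcases Nat.lt_or_ge w w' with hlt | hge
      · exact hPw'.2 (lmc_interval (hgeq ▸ hPw.1) hPw'.1 (by omega) (by omega))
      · have hlt : w' < w := by omega
        exact hPw.2 (lmc_interval (hgeq ▸ hPw'.1) hPw.1 (by omega) (by omega))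
    · intro w hw; exact (Finset.mem_filter.mp hw).2.1.1.1
    · intro w hw; exact (Finset.mem_filter.mp hw).2.1.1.2.2.1
    · intro w hw; exact (lmc_crit hq (Finset.mem_filter.mp hw).2.1).1
    · intro w hw
      exact fun k h1 h2 => (lmc_crit hq (Finset.mem_filter.mp hw).2.1).2 k h1 h2
  -- bound for B
  have hBcount : B.card * (B.card + 1) ≤ 2 * (n * Q.card) := by
    refine count_lemma n S Q B g (fun w => w - 1) ?_ ?_ ?_ ?_ ?_ ?_ ?_
    · intro w hw; show 1 ≤ w - 1; have := hDw w (Finset.mem_filter.mp hw).1; omega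
    · intro w hw w' hw' h
      have h' : w - 1 = w' - 1 := h
      have := hDw w (Finset.mem_filter.mp hw).1
      have := hDw w' (Finset.mem_filter.mp hw').1
      omega
    · intro w hw w' hw' hgeq
      have hwD := (Finset.mem_filter.mp hw).1
      have hw'D := (Finset.mem_filter.mp hw').1
      have hPw := hBspec w hw
      have hPw' := hBspec w' hw'
      have h2w := (hDw w hwD).1
      have h2w' := (hDw w' hw'D).1
      by_contra hne
      rcases Nat.lt_or_ge w w' with hlt | hlt2
      · exact hPw.1 (lmc_interval hPw.2 (hgeq ▸ hPw'.2) (by omega) (by omega))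
      · have hlt : w' < w := by omega
        exact hPw'.1 (lmc_interval hPw'.2 (hgeq.symm ▸ hPw.2) (by omega) (by omega))
    · intro w hw; exact (hBspec w hw).2.1.1
    · intro w hw
      have hc := (hBspec w hw).2.1.2.2.1
      have h2w := (hDw w (Finset.mem_filter.mp hw).1).1
      show g w + (w - 1 - 1) ≤ n
      have hr : w - 1 - 1 = w - 2 := by omega
      rw [hr]
      exact hc
    · intro w hw; exact (lmc_crit hq (hBspec w hw).2).1
    · intro w hw k h1 h2
      have h2' : k ≤ g w + (w - 1 - 1) := h2
      have h2w := (hDw w (Finset.mem_filter.mp hw).1).1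
      exact (lmc_crit hq (hBspec w hw).2).2 k h1 (by omega)
  have hAr : (A.card : ℝ) ≤ Real.sqrt 2 * Real.sqrt (n * Q.card) := card_le_sqrt hAcount
  have hBr : (B.card : ℝ) ≤ Real.sqrt 2 * Real.sqrt (n * Q.card) := card_le_sqrt hBcount
  have hDcard : D.card = A.card + B.card := by
    rw [hA, hB]
    exact (Finset.card_filter_add_card_filter_not (p := P) (s := D)).symm
  have hsqrt2 : Real.sqrt 2 ≤ 3/2 := by
    nlinarith [Real.sq_sqrt (by norm_num : (0:ℝ) ≤ 2), Real.sqrt_nonneg 2]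
  have hnn : 0 ≤ Real.sqrt ((n : ℝ) * Q.card) := Real.sqrt_nonneg _
  calc (D.card : ℝ) = (A.card : ℝ) + (B.card : ℝ) := by rw [hDcard]; push_cast; ring
    _ ≤ Real.sqrt 2 * Real.sqrt (n * Q.card) + Real.sqrt 2 * Real.sqrt (n * Q.card) :=
        add_le_add hAr hBr
    _ ≤ 3 * Real.sqrt (n * Q.card) := by nlinarith [hsqrt2, hnn, Real.sqrt_nonneg 2]
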